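/- For all integers r ≥ m ≥ 0, the identity Σ_{t=0}^{r−m} B_t · C(r,t) · S(r−t, m) = Σ_{i=m}^{r} C(i,m) · S(r,i) holds, where C(a,b) denotes the binomial coefficient. -/
import Mathlib


/-- Stirling numbers of the second kind. -/
def stirling : ℕ → ℕ → ℕ
  | 0, 0 => 1
  | 0, _ + 1 => 0
  | _ + 1, 0 => 0
  | n + 1, k + 1 => (k + 1) * stirling n (k + 1) + stirling n k

/-- The `t`-th Bell number, `B_t = Σ_{q=0}^{t} S(t,q)`. -/
def bell (t : ℕ) : ℕ := ∑ q ∈ Finset.range (t + 1), stirling t q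

lemma stirling_zero_right (n : ℕ) : stirling n 0 = if n = 0 then 1 else 0 := by
  cases n <;> rfl

lemma stirling_eq_zero_of_lt : ∀ n k, n < k → stirling n k = 0 := by
  intro n
  induction n with
  | zero => intro k hk; match k, hk with | k+1, _ => rfl
  | succ n ih =>
    intro k hk
    match k, hk with
    | k+1, hk =>
      show (k + 1) * stirling n (k + 1) + stirling n k = 0
      rw [ih (k+1) (by omega), ih k (by omega)]; simp

lemma conv_succ (f g : ℕ → ℕ) (r : ℕ) :
    ∑ t ∈ Finset.range (r+2), (r+1).choose t * (f t * g (r+1-t))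
      = ∑ t ∈ Finset.range (r+1), r.choose t * (f t * g (r+1-t) + f (t+1) * g (r-t)) := by
  rw [Finset.sum_range_succ' (fun t => (r+1).choose t * (f t * g (r+1-t))) (r+1)]
  simp only [Nat.succ_sub_succ]
  have h1 : ∀ t ∈ Finset.range (r+1), (r+1).choose (t+1) * (f (t+1) * g (r-t))
      = r.choose t * (f (t+1) * g (r-t)) + r.choose (t+1) * (f (t+1) * g (r-t)) := by
    intro t _; rw [Nat.choose_succ_succ]; ring
  rw [Finset.sum_congr rfl h1, Finset.sum_add_distrib]
  have h2 : ∑ t ∈ Finset.range (r+1), r.choose (t+1) * (f (t+1) * g (r-t))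
      + (r+1).choose 0 * (f 0 * g (r+1-0))
      = ∑ t ∈ Finset.range (r+1), r.choose t * (f t * g (r+1-t)) := by
    have := Finset.sum_range_succ' (fun t => r.choose t * (f t * g (r+1-t))) (r+1)
    rw [Finset.sum_range_succ (fun t => r.choose t * (f t * g (r+1-t))) (r+1)] at this
    simp only [Nat.succ_sub_succ, Nat.choose_succ_self, zero_mul, add_zero, Nat.choose_zero_right, one_mul] at this ⊢
    omega
  rw [add_assoc, h2]
  rw [← Finset.sum_add_distrib]
  apply Finset.sum_congr rfl
  intro t _; ring

lemma key : ∀ r q m, ∑ t ∈ Finset.range (r+1), r.choose t * (stirling t q * stirling (r-t) m)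
    = (q+m).choose m * stirling r (q+m) := by
  intro r
  induction r with
  | zero => intro q m; cases q <;> cases m <;> simp [stirling]
  | succ r ih =>
    intro q m
    match m with
    | 0 =>
      rw [Finset.sum_eq_single (r+1)]
      · simp [stirling_zero_right, stirling]
      · intro t ht htne
        have : r + 1 - t ≠ 0 := by simp at ht; omega
        simp [stirling_zero_right, this]
      · intro h; simp at h
    | m'+1 =>
      match q with
      | 0 =>
        rw [Finset.sum_eq_single 0]
        · simp [stirling]
        · intro t ht htne
          have ht0 : t ≠ 0 := htne
          rw [stirling_zero_right]; simp [ht0]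
        · intro h; simp at h
      | q'+1 =>
        rw [show r + 1 + 1 = r + 2 from rfl,
          conv_succ (fun t => stirling t (q'+1)) (fun s => stirling s (m'+1)) r]
        have hcong : ∀ t ∈ Finset.range (r+1),
            r.choose t * (stirling t (q'+1) * stirling (r+1-t) (m'+1)
              + stirling (t+1) (q'+1) * stirling (r-t) (m'+1))
            = (m'+1+(q'+1)) * (r.choose t * (stirling t (q'+1) * stirling (r-t) (m'+1)))
              + (r.choose t * (stirling t (q'+1) * stirling (r-t) m'))
              + (r.choose t * (stirling t q' * stirling (r-t) (m'+1))) := by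
          intro t ht
          have hts : r + 1 - t = (r - t) + 1 := by simp at ht; omega
          rw [hts]
          show r.choose t * (stirling t (q'+1) * ((m'+1) * stirling (r-t) (m'+1) + stirling (r-t) m')
              + ((q'+1) * stirling t (q'+1) + stirling t q') * stirling (r-t) (m'+1)) = _
          ring
        rw [Finset.sum_congr rfl hcong, Finset.sum_add_distrib, Finset.sum_add_distrib,
          ← Finset.mul_sum, ih (q'+1) (m'+1), ih (q'+1) m', ih q' (m'+1)]
        have e2 : q' + 1 + (m' + 1) = (q' + m' + 1) + 1 := by omega
        have e3 : q' + (m' + 1) = q' + m' + 1 := by omega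
        rw [e2, e3]
        show _ = ((q'+m'+1)+1).choose (m'+1) * ((q'+m'+1+1) * stirling r (q'+m'+1+1) + stirling r (q'+m'+1))
        have hp : ((q'+m'+1)+1).choose (m'+1)
            = (q'+m'+1).choose m' + (q'+m'+1).choose (m'+1) := Nat.choose_succ_succ _ _
        rw [hp]
        ring_nf


theorem bell_binomial_stirling_identity (r m : ℕ) (hmr : m ≤ r) :
    ∑ t ∈ Finset.range (r - m + 1), bell t * Nat.choose r t * stirling (r - t) m =
      ∑ i ∈ Finset.Icc m r, Nat.choose i m * stirling r i := by
  have h1 : ∑ t ∈ Finset.range (r - m + 1), bell t * Nat.choose r t * stirling (r - t) m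
      = ∑ t ∈ Finset.range (r + 1), bell t * Nat.choose r t * stirling (r - t) m := by
    apply Finset.sum_subset
    · exact Finset.range_subset_range.2 (by omega)
    · intro t ht hnt
      simp only [Finset.mem_range] at ht hnt
      rw [stirling_eq_zero_of_lt (r - t) m (by omega), mul_zero]
  rw [h1]
  have h2 : ∀ t ∈ Finset.range (r + 1), bell t * Nat.choose r t * stirling (r - t) m
      = ∑ q ∈ Finset.range (r + 1), r.choose t * (stirling t q * stirling (r - t) m) := by
    intro t ht
    simp only [Finset.mem_range] at ht
    have hb : ∑ q ∈ Finset.range (t + 1), stirling t q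
        = ∑ q ∈ Finset.range (r + 1), stirling t q := by
      apply Finset.sum_subset
      · exact Finset.range_subset_range.2 (by omega)
      · intro q hq hnq
        simp only [Finset.mem_range] at hq hnq
        exact stirling_eq_zero_of_lt t q (by omega)
    rw [bell, hb, Finset.sum_mul, Finset.sum_mul]
    apply Finset.sum_congr rfl
    intro q _; ring
  rw [Finset.sum_congr rfl h2, Finset.sum_comm]
  have h3 : ∀ q ∈ Finset.range (r + 1),
      ∑ t ∈ Finset.range (r + 1), r.choose t * (stirling t q * stirling (r - t) m)
      = (q + m).choose m * stirling r (q + m) := fun q _ => key r q m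
  rw [Finset.sum_congr rfl h3]
  have h4 : ∑ q ∈ Finset.range (r + 1), (q + m).choose m * stirling r (q + m)
      = ∑ q ∈ Finset.range (r - m + 1), (q + m).choose m * stirling r (q + m) := by
    symm
    apply Finset.sum_subset
    · exact Finset.range_subset_range.2 (by omega)
    · intro q hq hnq
      simp only [Finset.mem_range] at hq hnq
      rw [stirling_eq_zero_of_lt r (q + m) (by omega), mul_zero]
  rw [h4]
  apply Finset.sum_bij (fun q _ => q + m)
  · intro a ha; simp only [Finset.mem_range] at ha; simp only [Finset.mem_Icc]; omega
  · intro a _ b _ h; omega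
  · intro b hb; simp only [Finset.mem_Icc] at hb
    exact ⟨b - m, Finset.mem_range.2 (by omega), by omega⟩
  · intro a _; rfl
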